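/- For the GYNI game with uniformly distributed inputs q(x) = 2^{-N}, no-signaling correlations give no advantage: the maximal no-signaling winning probability equals the classical value 2·2^{-N} = ω_c. -/

import Mathlib

/-- A no-signaling box on `N` parties with binary inputs and outputs: for every
party `j`, the marginal over `a j` does not depend on `x j`. -/
def NoSignaling {N : ℕ} (P : (Fin N → Bool) → (Fin N → Bool) → ℝ) : Prop :=
  ∀ (j : Fin N) (x x' : Fin N → Bool), (∀ i, i ≠ j → x i = x' i) →
    ∀ a : Fin N → Bool,
      ∑ b : Bool, P x (Function.update a j b) = ∑ b : Bool, P x' (Function.update a j b)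

open Finset Function

lemma ns_event {N : ℕ} {P : (Fin N → Bool) → (Fin N → Bool) → ℝ}
    (hns : NoSignaling P) (p : Fin N) (x x' : Fin N → Bool)
    (hxx' : ∀ i, i ≠ p → x i = x' i)
    (F : (Fin N → Bool) → Prop) [DecidablePred F]
    (hF : ∀ a b, F a → F (Function.update a p b)) :
    ∑ a : Fin N → Bool, (if F a then P x a else 0)
      = ∑ a : Fin N → Bool, (if F a then P x' a else 0) := by
  have hFe : ∀ a : Fin N → Bool, F (update a p (!(a p))) ↔ F a := by
    intro a
    constructor
    · intro h
      have := hF _ (a p) h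
      rwa [update_idem, update_eq_self] at this
    · intro h; exact hF a _ h
  have hinv : Function.Bijective (fun a : Fin N → Bool => update a p (!(a p))) := by
    apply Function.Involutive.bijective
    intro a
    simp [update_idem, update_self, update_eq_self]
  have key : ∀ y : Fin N → Bool,
      ∑ a : Fin N → Bool, (if F a then P y a else 0)
        = ∑ a : Fin N → Bool,
            (if F a ∧ a p = false then ∑ b : Bool, P y (Function.update a p b) else 0) := by
    intro y
    have h1 : ∑ a : Fin N → Bool, (if F a then P y a else 0)
        = ∑ a : Fin N → Bool, ((if F a ∧ a p = false then P y a else 0)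
            + (if F a ∧ a p = true then P y a else 0)) := by
      refine Finset.sum_congr rfl fun a _ => ?_
      by_cases hFa : F a
      · cases hap : a p <;> simp [hFa, hap]
      · simp [hFa]
    have h2 : ∑ a : Fin N → Bool, (if F a ∧ a p = true then P y a else 0)
        = ∑ a : Fin N → Bool, (if F a ∧ a p = false then P y (update a p true) else 0) := by
      calc ∑ a : Fin N → Bool, (if F a ∧ a p = true then P y a else 0)
          = ∑ a : Fin N → Bool, (if F (update a p (!(a p))) ∧ (update a p (!(a p))) p = true
              then P y (update a p (!(a p))) else 0) := (hinv.sum_comp _).symm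
        _ = _ := by
            refine Finset.sum_congr rfl fun a _ => ?_
            have hFa := hFe a
            cases hap : a p
            · rw [hap] at hFa
              simp only [Bool.not_false, update_self] at hFa ⊢
              simp only [and_true, eq_self_iff_true]
              exact if_congr hFa rfl rfl
            · simp [update_self]
    rw [h1, Finset.sum_add_distrib, h2, ← Finset.sum_add_distrib]
    refine Finset.sum_congr rfl fun a _ => ?_
    by_cases hc : F a ∧ a p = false
    · rw [if_pos hc, if_pos hc, if_pos hc, Fintype.sum_bool]
      have : update a p false = a := by rw [← hc.2]; exact update_eq_self p a
      rw [this]; ring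
    · simp [hc]
  rw [key x, key x']
  refine Finset.sum_congr rfl fun a _ => ?_
  by_cases h : F a ∧ a p = false
  · rw [if_pos h, if_pos h]
    exact hns p x x' hxx' a
  · simp [h]

noncomputable def gQ {N : ℕ} [NeZero N] (P : (Fin N → Bool) → (Fin N → Bool) → ℝ) (k : ℕ)
    (x : Fin N → Bool) : ℝ :=
  ∑ a : Fin N → Bool, if (∀ i : Fin N, (i : ℕ) < k → a i = x (i + 1)) then P x a else 0

lemma gQ_zero {N : ℕ} [NeZero N] (P : (Fin N → Bool) → (Fin N → Bool) → ℝ)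
    (hnorm : ∀ x, ∑ a : Fin N → Bool, P x a = 1) (x : Fin N → Bool) : gQ P 0 x = 1 := by
  unfold gQ
  simp only [Nat.not_lt_zero, false_implies, implies_true, if_true]
  exact hnorm x

lemma gQ_step {N : ℕ} [NeZero N] (P : (Fin N → Bool) → (Fin N → Bool) → ℝ) (hns : NoSignaling P)
    (k : ℕ) (hk : k + 1 < N) :
    ∑ x : Fin N → Bool, gQ P k x
      = (∑ x : Fin N → Bool, gQ P (k + 1) x) + ∑ x : Fin N → Bool, gQ P (k + 1) x := by
  set p : Fin N := ⟨k + 1, hk⟩ with hp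
  set q : Fin N := ⟨k, by omega⟩ with hq
  have hqval : (q : ℕ) = k := rfl
  have hpval : (p : ℕ) = k + 1 := rfl
  have h1 : ((1 : Fin N) : ℕ) = 1 := by
    rw [Fin.val_one']
    exact Nat.mod_eq_of_lt (by omega)
  have hq1 : q + 1 = p := by
    apply Fin.ext
    rw [Fin.add_def, hqval, h1, hpval]
    exact Nat.mod_eq_of_lt hk
  have hval : ∀ i : Fin N, (i : ℕ) < k + 1 → ((i + 1 : Fin N) : ℕ) = (i : ℕ) + 1 := by
    intro i hi
    rw [Fin.add_def, h1]
    exact Nat.mod_eq_of_lt (by omega)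
  have hne : ∀ i : Fin N, (i : ℕ) < k → (i + 1) ≠ p := by
    intro i hi hcon
    have h2 := hval i (by omega)
    rw [hcon, hpval] at h2
    omega
  have hip : ∀ i : Fin N, (i : ℕ) < k → i ≠ p := by
    intro i hi hcon
    have := congrArg Fin.val hcon
    rw [hpval] at this
    omega
  have hqp : q ≠ p := by
    intro hcon
    have := congrArg Fin.val hcon
    rw [hqval, hpval] at this
    omega
  have key : ∀ x : Fin N → Bool,
      gQ P (k + 1) x + gQ P (k + 1) (update x p (!(x p))) = gQ P k x := by
    intro x
    have e1 : gQ P (k + 1) x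
        = ∑ a : Fin N → Bool,
            if ((∀ i : Fin N, (i : ℕ) < k → a i = x (i + 1)) ∧ a q = x p) then P x a else 0 := by
      refine Finset.sum_congr rfl fun a _ => if_congr ?_ rfl rfl
      constructor
      · intro h
        refine ⟨fun i hi => h i (by omega), ?_⟩
        have := h q (by rw [hqval]; omega)
        rwa [hq1] at this
      · rintro ⟨hb, h2⟩ i hi
        by_cases hik : (i : ℕ) < k
        · exact hb i hik
        · have hiq : i = q := Fin.ext (by rw [hqval]; omega)
          rw [hiq, hq1]
          exact h2
    have e2 : gQ P (k + 1) (update x p (!(x p)))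
        = ∑ a : Fin N → Bool,
            if ((∀ i : Fin N, (i : ℕ) < k → a i = x (i + 1)) ∧ a q = !(x p)) then P x a else 0 := by
      have hcond : ∀ a : Fin N → Bool,
          ((∀ i : Fin N, (i : ℕ) < k + 1 → a i = update x p (!(x p)) (i + 1))
            ↔ ((∀ i : Fin N, (i : ℕ) < k → a i = x (i + 1)) ∧ a q = !(x p))) := by
        intro a
        constructor
        · intro h
          refine ⟨fun i hi => ?_, ?_⟩
          · have := h i (by omega)
            rwa [update_of_ne (hne i hi)] at this
          · have := h q (by rw [hqval]; omega)
            rwa [hq1, update_self] at this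
        · rintro ⟨hb, h2⟩ i hi
          by_cases hik : (i : ℕ) < k
          · rw [update_of_ne (hne i hik)]
            exact hb i hik
          · have hiq : i = q := Fin.ext (by rw [hqval]; omega)
            rw [hiq, hq1, update_self]
            exact h2
      calc gQ P (k + 1) (update x p (!(x p)))
          = ∑ a : Fin N → Bool,
              if ((∀ i : Fin N, (i : ℕ) < k → a i = x (i + 1)) ∧ a q = !(x p))
              then P (update x p (!(x p))) a else 0 :=
            Finset.sum_congr rfl fun a _ => if_congr (hcond a) rfl rfl
        _ = _ := by
            refine ns_event hns p (update x p (!(x p))) x (fun i hi => update_of_ne hi _ _) _ ?_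
            rintro a b ⟨hb, h2⟩
            refine ⟨fun i hi => ?_, ?_⟩
            · rw [update_of_ne (hip i hi)]
              exact hb i hi
            · rw [update_of_ne hqp]
              exact h2
    rw [e1, e2, ← Finset.sum_add_distrib]
    refine Finset.sum_congr rfl fun a _ => ?_
    by_cases hb : ∀ i : Fin N, (i : ℕ) < k → a i = x (i + 1)
    · cases haq : a q <;> cases hxp : x p <;> simp [hb, haq, hxp]
    · simp [hb]
  have hflip : ∑ x : Fin N → Bool, gQ P (k + 1) (update x p (!(x p)))
      = ∑ x : Fin N → Bool, gQ P (k + 1) x := by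
    have hinv : Function.Bijective (fun x : Fin N → Bool => update x p (!(x p))) := by
      apply Function.Involutive.bijective
      intro a
      simp [update_idem, update_self, update_eq_self]
    exact hinv.sum_comp _
  calc ∑ x : Fin N → Bool, gQ P k x
      = ∑ x : Fin N → Bool, (gQ P (k + 1) x + gQ P (k + 1) (update x p (!(x p)))) :=
        (Finset.sum_congr rfl fun x _ => key x).symm
    _ = _ := by rw [Finset.sum_add_distrib, hflip]

lemma gQ_sum {N : ℕ} [NeZero N] (P : (Fin N → Bool) → (Fin N → Bool) → ℝ)
    (hnorm : ∀ x, ∑ a : Fin N → Bool, P x a = 1) (hns : NoSignaling P) :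
    ∀ k, k < N → (∑ x : Fin N → Bool, gQ P k x) * 2 ^ k = (2 : ℝ) ^ N := by
  intro k
  induction k with
  | zero =>
    intro _
    simp only [pow_zero, mul_one]
    rw [Finset.sum_congr rfl fun x _ => gQ_zero P hnorm x]
    have hcard : (Fintype.card (Fin N → Bool)) = 2 ^ N := by
      simp [Fintype.card_fun]
    rw [Finset.sum_const, Finset.card_univ, hcard, nsmul_eq_mul]
    push_cast
    ring
  | succ k ih =>
    intro hk
    have h1 := ih (by omega)
    have h2 := gQ_step P hns k hk
    have h3 : ∑ x : Fin N → Bool, gQ P k x = 2 * ∑ x : Fin N → Bool, gQ P (k + 1) x := by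
      rw [h2]; ring
    rw [h3] at h1
    calc (∑ x : Fin N → Bool, gQ P (k + 1) x) * 2 ^ (k + 1)
        = (2 * ∑ x : Fin N → Bool, gQ P (k + 1) x) * 2 ^ k := by ring
      _ = (2 : ℝ) ^ N := h1

lemma win_le {N : ℕ} [NeZero N] (P : (Fin N → Bool) → (Fin N → Bool) → ℝ)
    (hpos : ∀ x a, 0 ≤ P x a) (x : Fin N → Bool) :
    P x (fun i => x (i + 1)) ≤ gQ P (N - 1) x := by
  unfold gQ
  have hnn : ∀ a : Fin N → Bool, a ∈ Finset.univ →
      (0 : ℝ) ≤ if (∀ i : Fin N, (i : ℕ) < N - 1 → a i = x (i + 1)) then P x a else 0 := by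
    intro a _
    split
    · exact hpos x a
    · exact le_refl 0
  have := Finset.single_le_sum hnn (Finset.mem_univ (fun i => x (i + 1)))
  rwa [if_pos (fun i _ => rfl)] at this

lemma boxD_ns {N : ℕ} :
    NoSignaling (fun x a : Fin N → Bool => if a = x then (1 : ℝ) else 0) := by
  classical
  intro j x x' hxx' a
  have hgen : ∀ y : Fin N → Bool,
      (∑ b : Bool, if Function.update a j b = y then (1 : ℝ) else 0)
        = if (∀ i, i ≠ j → a i = y i) then 1 else 0 := by
    intro y
    rw [Fintype.sum_bool]
    by_cases h : ∀ i, i ≠ j → a i = y i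
    · have h1 : Function.update a j (y j) = y := by
        funext i
        by_cases hij : i = j
        · subst hij; rw [update_self]
        · rw [update_of_ne hij]; exact h i hij
      have h2 : ∀ b : Bool, b ≠ y j → Function.update a j b ≠ y := by
        intro b hb hcon
        apply hb
        have := congrFun hcon j
        rwa [update_self] at this
      cases hyj : y j
      · rw [if_neg (h2 true (by rw [hyj]; exact Bool.noConfusion)),
          if_pos (by rw [← hyj]; exact h1), if_pos h]
        norm_num
      · rw [if_pos (by rw [← hyj]; exact h1),
          if_neg (h2 false (by rw [hyj]; exact Bool.noConfusion)), if_pos h]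
        norm_num
    · have h2 : ∀ b : Bool, Function.update a j b ≠ y := by
        intro b hcon
        apply h
        intro i hij
        have := congrFun hcon i
        rwa [update_of_ne hij] at this
      rw [if_neg (h2 true), if_neg (h2 false), if_neg h]
      norm_num
  rw [hgen x, hgen x']
  refine if_congr ?_ rfl rfl
  constructor <;> intro h i hij
  · rw [← hxx' i hij]; exact h i hij
  · rw [hxx' i hij]; exact h i hij

open Fin.NatCast in
lemma boxD_value {N : ℕ} [NeZero N] :
    ∑ x : Fin N → Bool,
        (1 / 2 ^ N : ℝ) * (if (fun i => x (i + 1)) = x then (1 : ℝ) else 0)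
      = 2 * (1 / 2 ^ N : ℝ) := by
  classical
  have hconst : ∀ x : Fin N → Bool,
      ((fun i => x (i + 1)) = x) ↔ (x = (fun _ => false) ∨ x = (fun _ => true)) := by
    intro x
    constructor
    · intro h
      have h' : ∀ i : Fin N, x (i + 1) = x i := fun i => congrFun h i
      have hkey : ∀ m : ℕ, x ((m : Fin N)) = x 0 := by
        intro m
        induction m with
        | zero => norm_num
        | succ n ih =>
          have hcast : ((n + 1 : ℕ) : Fin N) = (n : Fin N) + 1 := by push_cast; ring
          rw [hcast, h', ih]
      have hx0 : ∀ j : Fin N, x j = x 0 := by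
        intro j
        have := hkey j.val
        rwa [Fin.cast_val_eq_self] at this
      cases h0 : x 0
      · left; funext j; rw [hx0 j, h0]
      · right; funext j; rw [hx0 j, h0]
    · rintro (rfl | rfl) <;> rfl
  have hFT : ((fun _ => false : Fin N → Bool)) ≠ (fun _ => true) := by
    intro hcon
    exact Bool.noConfusion (congrFun hcon 0)
  have hsplit : ∀ x : Fin N → Bool,
      (1 / 2 ^ N : ℝ) * (if (fun i => x (i + 1)) = x then (1 : ℝ) else 0)
        = (if x = (fun _ => false) then (1 / 2 ^ N : ℝ) else 0)
          + (if x = (fun _ => true) then (1 / 2 ^ N : ℝ) else 0) := by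
    intro x
    by_cases h : (fun i => x (i + 1)) = x
    · rw [if_pos h, mul_one]
      rcases (hconst x).1 h with h' | h'
      · rw [if_pos h', if_neg (by rw [h']; exact hFT), add_zero]
      · rw [if_neg (by rw [h']; exact fun hc => hFT hc.symm), if_pos h', zero_add]
    · rw [if_neg h, mul_zero, if_neg, if_neg, add_zero]
      · intro hcon
        exact h ((hconst x).2 (Or.inr hcon))
      · intro hcon
        exact h ((hconst x).2 (Or.inl hcon))
  rw [Finset.sum_congr rfl fun x _ => hsplit x, Finset.sum_add_distrib,
    Finset.sum_ite_eq' Finset.univ, Finset.sum_ite_eq' Finset.univ]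
  simp
  ring


/-- For the GYNI game with uniformly distributed inputs `q x = 2^{-N}`,
no-signaling correlations give no advantage: the maximal no-signaling winning
probability equals the classical value `2 · 2^{-N}`. -/
theorem gyni_uniform_ns_eq_classical (N : ℕ) [NeZero N] :
    IsGreatest
      {w : ℝ | ∃ P : (Fin N → Bool) → (Fin N → Bool) → ℝ,
        (∀ x a, 0 ≤ P x a) ∧ (∀ x, ∑ a : Fin N → Bool, P x a = 1) ∧
        NoSignaling P ∧
        w = ∑ x : Fin N → Bool, (1 / 2 ^ N : ℝ) * P x (fun i => x (i + 1))}
      (2 * (1 / 2 ^ N : ℝ)) := by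
  classical
  constructor
  · refine ⟨fun x a => if a = x then (1 : ℝ) else 0, ?_, ?_, boxD_ns, ?_⟩
    · intro x a
      dsimp only
      split
      · norm_num
      · exact le_refl 0
    · intro x
      simp
    · exact boxD_value.symm
  · rintro w ⟨P, hpos, hnorm, hns, rfl⟩
    have hN : 0 < N := Nat.pos_of_ne_zero (NeZero.ne N)
    have hsum := gQ_sum P hnorm hns (N - 1) (by omega)
    have h2N : (2 : ℝ) ^ N = 2 * 2 ^ (N - 1) := by
      rw [← pow_succ']
      congr 1
      omega
    have hz : ((2 : ℝ) ^ (N - 1)) ≠ 0 := by positivity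
    have hsum2 : ∑ x : Fin N → Bool, gQ P (N - 1) x = 2 :=
      mul_right_cancel₀ hz (by rw [hsum, h2N])
    have hc : (0 : ℝ) ≤ 1 / 2 ^ N := by positivity
    calc ∑ x : Fin N → Bool, (1 / 2 ^ N : ℝ) * P x (fun i => x (i + 1))
        ≤ ∑ x : Fin N → Bool, (1 / 2 ^ N : ℝ) * gQ P (N - 1) x :=
          Finset.sum_le_sum fun x _ =>
            mul_le_mul_of_nonneg_left (win_le P hpos x) hc
      _ = (1 / 2 ^ N : ℝ) * ∑ x : Fin N → Bool, gQ P (N - 1) x := by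
          rw [Finset.mul_sum]
      _ = 2 * (1 / 2 ^ N : ℝ) := by rw [hsum2]; ring
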